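/- Let (f_λ)_{λ} be a net in the unit sphere of ℓ1 and let f ∈ ℓ1 with ‖f‖₁ = 1. If f_λ converges to f coordinatewise, i.e., f_λ(n) → f(n) for every n, then f_λ converges to f in the weak topology σ(ℓ1, (ℓ1)*), i.e., F(f_λ) → F(f) for every continuous linear functional F on ℓ1. -/

import Mathlib

open NormedSpace Filter Topology

noncomputable section

lemma aux_mul_bound (N : ℕ) {ε : ℝ} (hε : 0 < ε) :
    (N : ℝ) * (ε / (8 * (N + 1))) ≤ ε / 8 := by
  rw [mul_div_assoc', div_le_div_iff₀ (by positivity) (by norm_num)]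
  nlinarith [hε.le, (Nat.cast_nonneg N : (0:ℝ) ≤ N)]

lemma lp_one_norm_eq (x : lp (fun _ : ℕ => ℝ) 1) : ‖x‖ = ∑' n, |x n| := by
  have := lp.norm_eq_tsum_rpow (p := 1) (by norm_num) x
  simpa [Real.norm_eq_abs] using this

lemma lp_one_summable (x : lp (fun _ : ℕ => ℝ) 1) : Summable fun n => |x n| := by
  have := (lp.memℓp x).summable (p := 1) (by norm_num)
  simpa [Real.norm_eq_abs] using this

/-- If a net `(f_λ)` in the unit sphere of `ℓ¹` converges
coordinatewise to `f` with `‖f‖₁ = 1`, then it converges weakly to `f`. -/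
theorem stmt_7 {ι : Type*} (L : Filter ι) [L.NeBot]
    (f : ι → lp (fun _ : ℕ => ℝ) 1) (g : lp (fun _ : ℕ => ℝ) 1)
    (hf : ∀ i, ‖f i‖ = 1) (hg : ‖g‖ = 1)
    (hcoord : ∀ n : ℕ, Tendsto (fun i => f i n) L (𝓝 (g n))) :
    ∀ F : StrongDual ℝ (lp (fun _ : ℕ => ℝ) 1), Tendsto (fun i => F (f i)) L (𝓝 (F g)) := by
  have hgs : Summable fun n => |g n| := lp_one_summable g
  -- First show norm convergence
  have hnorm : Tendsto f L (𝓝 g) := by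
    rw [Metric.tendsto_nhds]
    intro ε hε
    -- choose N with tail of g small
    have htail : Tendsto (fun N => ∑' k, |g (k + N)|) atTop (𝓝 0) :=
      tendsto_sum_nat_add (fun n => |g n|)
    obtain ⟨N, hN⟩ := (htail.eventually (gt_mem_nhds (by positivity : (0:ℝ) < ε/8))).exists
    -- eventually all coordinates below N are close
    have hev : ∀ᶠ i in L, ∀ n ∈ Finset.range N, |f i n - g n| < ε / (8 * (N + 1)) := by
      rw [Filter.eventually_all_finset]
      intro n _
      have := (hcoord n).sub_const (g n)
      have h0 : Tendsto (fun i => |f i n - g n|) L (𝓝 0) := by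
        simpa using this.abs
      exact h0.eventually (gt_mem_nhds (by positivity))
    filter_upwards [hev] with i hi
    rw [dist_eq_norm, lp_one_norm_eq]
    have hsum_sub : Summable fun n => |(f i - g : lp (fun _ : ℕ => ℝ) 1) n| :=
      lp_one_summable _
    have hfs : Summable fun n => |f i n| := lp_one_summable (f i)
    have happ : ∀ n, ((f i - g : lp (fun _ : ℕ => ℝ) 1) n) = f i n - g n := by
      intro n; simp [lp.coeFn_sub, Pi.sub_apply]
    -- split the tsum
    have hsplit := Summable.sum_add_tsum_nat_add N hsum_sub
    rw [← hsplit]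
    -- bound finite part
    have hfin : ∑ n ∈ Finset.range N, |(f i - g : lp (fun _ : ℕ => ℝ) 1) n| ≤ ε / 8 := by
      calc ∑ n ∈ Finset.range N, |(f i - g : lp (fun _ : ℕ => ℝ) 1) n|
          ≤ ∑ n ∈ Finset.range N, ε / (8 * (N + 1)) := by
            apply Finset.sum_le_sum
            intro n hn
            rw [happ]
            exact (hi n hn).le
        _ = N * (ε / (8 * (N + 1))) := by rw [Finset.sum_const, Finset.card_range]; ring
        _ ≤ ε / 8 := aux_mul_bound N hε
    -- bound the tail
    have htail_f : ∑' k, |f i (k + N)| ≤ ε / 4 := by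
      have h1 : ∑ n ∈ Finset.range N, |f i n| + ∑' k, |f i (k + N)| = 1 := by
        rw [Summable.sum_add_tsum_nat_add N hfs, ← lp_one_norm_eq, hf i]
      have h2 : ∑ n ∈ Finset.range N, |g n| + ∑' k, |g (k + N)| = 1 := by
        rw [Summable.sum_add_tsum_nat_add N hgs, ← lp_one_norm_eq, hg]
      have h3 : ∑ n ∈ Finset.range N, |g n| - ε/8 ≤ ∑ n ∈ Finset.range N, |f i n| := by
        have : ∑ n ∈ Finset.range N, (|g n| - |f i n|) ≤ ε / 8 := by
          calc ∑ n ∈ Finset.range N, (|g n| - |f i n|)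
              ≤ ∑ n ∈ Finset.range N, |f i n - g n| := by
                apply Finset.sum_le_sum
                intro n _
                have := abs_sub_abs_le_abs_sub (g n) (f i n)
                rw [abs_sub_comm] at this
                linarith
            _ ≤ ε / 8 := by
                calc ∑ n ∈ Finset.range N, |f i n - g n|
                    ≤ ∑ n ∈ Finset.range N, ε / (8 * (N + 1)) :=
                      Finset.sum_le_sum fun n hn => (hi n hn).le
                  _ = N * (ε / (8 * (N + 1))) := by
                      rw [Finset.sum_const, Finset.card_range]; ring
                  _ ≤ ε / 8 := aux_mul_bound N hε
        rw [Finset.sum_sub_distrib] at this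
        linarith
      have h4 : ∑' k, |g (k + N)| < ε / 8 := hN
      linarith
    have htail_g : ∑' k, |g (k + N)| < ε / 8 := hN
    have htail : ∑' k, |(f i - g : lp (fun _ : ℕ => ℝ) 1) (k + N)| ≤ ε/4 + ε/8 := by
      have hs1 : Summable fun k => |f i (k + N)| := (summable_nat_add_iff (f := fun n => |f i n|) N).mpr hfs
      have hs2 : Summable fun k => |g (k + N)| := (summable_nat_add_iff (f := fun n => |g n|) N).mpr hgs
      calc ∑' k, |(f i - g : lp (fun _ : ℕ => ℝ) 1) (k + N)|
          ≤ ∑' k, (|f i (k + N)| + |g (k + N)|) := by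
            apply Summable.tsum_le_tsum _ ((summable_nat_add_iff (f := fun n => |(f i - g : lp (fun _ : ℕ => ℝ) 1) n|) N).mpr hsum_sub) (hs1.add hs2)
            intro k
            rw [happ]
            exact abs_sub (f i (k + N)) (g (k + N))
        _ = ∑' k, |f i (k + N)| + ∑' k, |g (k + N)| := Summable.tsum_add hs1 hs2
        _ ≤ ε/4 + ε/8 := by linarith
    linarith
  intro F
  exact (F.continuous.tendsto g).comp hnorm
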